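/- If μ ≥ η̃ > 0 and ν > 9η̃μ/(4μ−η̃), then there exists q̃₀ ∈ (3/4, 1) such that for all q̃ ∈ (q̃₀, 1) one has det B(v₋(q̃)) > 0. (Key step of Lemma 2(i).) -/

import Mathlib

open Real Matrix Filter Topology Set

noncomputable section

/-- The state space condition `ψ⁰ > |ψ¹|`. -/
def StateSpace (ψ : Fin 2 → ℝ) : Prop := |ψ 1| < ψ 0

/-- Temperature variable `θ(ψ) = ((ψ⁰)² − (ψ¹)²)^(−1/2)`. -/
def θf (ψ : Fin 2 → ℝ) : ℝ := (Real.sqrt ((ψ 0) ^ 2 - (ψ 1) ^ 2))⁻¹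

/-- `u(ψ) = θ(ψ) ψ⁰`. -/
def uf (ψ : Fin 2 → ℝ) : ℝ := θf ψ * ψ 0

/-- `v(ψ) = θ(ψ) ψ¹`. -/
def vf (ψ : Fin 2 → ℝ) : ℝ := θf ψ * ψ 1

/-- Ideal stress component `T⁰¹`. -/
def T01 (ψ : Fin 2 → ℝ) : ℝ := (4 / 3) * (θf ψ) ^ 4 * uf ψ * vf ψ

/-- Ideal stress component `T¹¹`. -/
def T11 (ψ : Fin 2 → ℝ) : ℝ := (θf ψ) ^ 4 * ((4 / 3) * (vf ψ) ^ 2 + 1 / 3)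

/-- `u = √(1+v²)` as a function of the velocity `v`. -/
def uu (v : ℝ) : ℝ := Real.sqrt (1 + v ^ 2)

/-- Viscosity matrix `B̃_visc(v)`. -/
def Bvisc (v : ℝ) : Matrix (Fin 2) (Fin 2) ℝ :=
  !![(uu v) ^ 2 * v ^ 2, -((uu v) ^ 3 * v); -((uu v) ^ 3 * v), (uu v) ^ 4]

/-- Thermal regulator matrix `B_ther(v)`. -/
def Bther (v : ℝ) : Matrix (Fin 2) (Fin 2) ℝ :=
  !![16 * (uu v) ^ 2 * v ^ 2, -(4 * uu v * v * (4 * v ^ 2 + 1));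
     -(4 * uu v * v * (4 * v ^ 2 + 1)), (4 * v ^ 2 + 1) ^ 2]

/-- Velocity regulator matrix `B_velo(v)`. -/
def Bvelo (v : ℝ) : Matrix (Fin 2) (Fin 2) ℝ :=
  !![((uu v) ^ 2 + v ^ 2) ^ 2, -(2 * ((uu v) ^ 2 + v ^ 2) * uu v * v);
     -(2 * ((uu v) ^ 2 + v ^ 2) * uu v * v), 4 * (uu v) ^ 2 * v ^ 2]

/-- The full dissipation matrix `B(v) = η̃ B̃_visc − μ B_ther − ν B_velo`. -/
def Bmat (η μ ν v : ℝ) : Matrix (Fin 2) (Fin 2) ℝ :=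
  η • Bvisc v - μ • Bther v - ν • Bvelo v

/-- The (rescaled) flux Jacobian `A(v)`. -/
def Amat (v : ℝ) : Matrix (Fin 2) (Fin 2) ℝ :=
  !![v * (6 * (uu v) ^ 2 - 1), -(uu v * (6 * v ^ 2 + 1));
     -(uu v * (6 * v ^ 2 + 1)), v * (6 * v ^ 2 + 3)]

/-- Upstream velocity `v₋(q̃)`. -/
def vminus (q : ℝ) : ℝ :=
  Real.sqrt (((2 * q - 1) + Real.sqrt (q * (4 * q - 3))) / (4 * (1 - q)))

/-- Downstream velocity `v₊(q̃)`. -/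
def vplus (q : ℝ) : ℝ :=
  Real.sqrt (((2 * q - 1) - Real.sqrt (q * (4 * q - 3))) / (4 * (1 - q)))

/-- The state `ψ` with velocity `v` on the Hugoniot curve `T¹¹ = 1`. -/
def psiOf (v : ℝ) : Fin 2 → ℝ :=
  ((4 / 3) * v ^ 2 + 1 / 3) ^ ((1 : ℝ) / 4) • ![Real.sqrt (1 + v ^ 2), v]

/-- Upstream state `ψ₋(q̃)`. -/
def psiMinus (q : ℝ) : Fin 2 → ℝ := psiOf (vminus q)

/-- Downstream state `ψ₊(q̃)`. -/
def psiPlus (q : ℝ) : Fin 2 → ℝ := psiOf (vplus q)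

/-- `ψ : ℝ → Ψ` is a C¹ solution of the profile ODE
`B(v(ψ))·ψ' = (T⁰¹(ψ) − q̃^(−1/2), T¹¹(ψ) − 1)`. -/
def ProfileSolution (η μ ν q : ℝ) (ψ : ℝ → Fin 2 → ℝ) : Prop :=
  ContDiff ℝ 1 ψ ∧ (∀ t, StateSpace (ψ t)) ∧
  ∀ t, (Bmat η μ ν (vf (ψ t))).mulVec (deriv ψ t) =
    ![T01 (ψ t) - (Real.sqrt q)⁻¹, T11 (ψ t) - 1]

end

lemma det_Bmat (η μ ν v : ℝ) :
    (Bmat η μ ν v).det =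
    (4*μ*ν - η*ν - 9*η*μ) * v^4 - (9*η*μ + 2*η*ν + 4*μ*ν) * v^2 + ν*(μ-η) := by
  have h : uu v ^ 2 = 1 + v ^ 2 := Real.sq_sqrt (by positivity)
  simp only [Bmat, Bvisc, Bther, Bvelo, Matrix.det_fin_two, Matrix.sub_apply,
    Matrix.smul_apply, smul_eq_mul, Matrix.of_apply, Matrix.cons_val', Matrix.cons_val_zero,
    Matrix.cons_val_one, Matrix.head_cons, Matrix.empty_val',
    Matrix.cons_val_fin_one, Matrix.head_fin_const]
  linear_combination (μ*ν + μ*ν*(uu v)^2 + (-5)*μ*ν*v^2 + (-8)*μ*ν*v^2*(uu v)^2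
    + (8)*μ*ν*v^4 + (16)*μ*ν*v^4*(uu v)^2 + (-16)*μ*ν*v^6 + (-1)*η*ν
    + (-1)*η*ν*(uu v)^2 + (-1)*η*ν*(uu v)^4 + (-1)*η*ν*(uu v)^6 + (-1)*η*ν*v^2
    + η*ν*v^2*(uu v)^4 + (-9)*η*μ*v^2 + (-8)*η*μ*v^2*(uu v)^2
    + (-16)*η*μ*v^2*(uu v)^4 + (16)*η*μ*v^4*(uu v)^2) * h

/-- Key step of Lemma 2(i): in the strictly causal case `ν > 9η̃μ/(4μ−η̃)`,
`det B(v₋(q̃)) > 0` for all `q̃` sufficiently close to `1`. -/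
theorem det_B_positive_near_one (η μ ν : ℝ) (hη : 0 < η) (hμ : η ≤ μ)
    (hν : 9 * η * μ / (4 * μ - η) < ν) :
    ∃ q₀ ∈ Set.Ioo (3 / 4 : ℝ) 1, ∀ q ∈ Set.Ioo q₀ 1,
      0 < (Bmat η μ ν (vminus q)).det := by
  have hμ4 : 0 < 4 * μ - η := by linarith
  have hν9 : 9 * η * μ < ν * (4 * μ - η) := by
    have := (div_lt_iff₀ hμ4).mp hν; linarith
  have hν0 : 0 < ν := by nlinarith
  have hA0 : 0 < 4*μ*ν - η*ν - 9*η*μ := by nlinarith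
  have hBc0 : 0 < 9*η*μ + 2*η*ν + 4*μ*ν := by nlinarith
  obtain ⟨W, hW1, hAW⟩ : ∃ W : ℝ, 1 ≤ W ∧
      9*η*μ + 2*η*ν + 4*μ*ν < (4*μ*ν - η*ν - 9*η*μ) * W := by
    refine ⟨(9*η*μ + 2*η*ν + 4*μ*ν) / (4*μ*ν - η*ν - 9*η*μ) + 1,
      by have := div_nonneg hBc0.le hA0.le; linarith, ?_⟩
    have h1 : (4*μ*ν - η*ν - 9*η*μ) *
        ((9*η*μ + 2*η*ν + 4*μ*ν) / (4*μ*ν - η*ν - 9*η*μ)) =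
        9*η*μ + 2*η*ν + 4*μ*ν := by
      rw [mul_div_assoc']; exact mul_div_cancel_left₀ _ hA0.ne'
    nlinarith
  have hW0 : (0:ℝ) < W := by linarith
  refine ⟨max (7/8) (1 - 1/(8*W)), ⟨lt_max_of_lt_left (by norm_num), ?_⟩, fun q hq => ?_⟩
  · have : (0:ℝ) < 1/(8*W) := by positivity
    exact max_lt (by norm_num) (by linarith)
  obtain ⟨hq1, hq2⟩ := hq
  have hq78 : 7/8 < q := lt_of_le_of_lt (le_max_left _ _) hq1
  have hqe : 1 - 1/(8*W) < q := lt_of_le_of_lt (le_max_right _ _) hq1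
  have h1q : 0 < 1 - q := by linarith
  have h1qW : (1 - q) * (8*W) < 1 := by
    have h : 1 - q < 1/(8*W) := by linarith
    calc (1-q) * (8*W) < (1/(8*W)) * (8*W) :=
          mul_lt_mul_of_pos_right h (by positivity)
      _ = 1 := by field_simp
  have hs0 : 0 ≤ Real.sqrt (q * (4*q - 3)) := Real.sqrt_nonneg _
  have hXden : 0 < 4 * (1 - q) := by linarith
  have hXpos : 0 ≤ ((2*q - 1) + Real.sqrt (q * (4*q - 3))) / (4 * (1 - q)) :=
    div_nonneg (by linarith) (by linarith)
  have hv2 : (vminus q) ^ 2 = ((2*q - 1) + Real.sqrt (q * (4*q - 3))) / (4 * (1 - q)) :=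
    Real.sq_sqrt hXpos
  have hWlt : W < (vminus q) ^ 2 := by
    rw [hv2, lt_div_iff₀ hXden]
    nlinarith
  have hdet : (Bmat η μ ν (vminus q)).det =
      (4*μ*ν - η*ν - 9*η*μ) * ((vminus q)^2)^2
        - (9*η*μ + 2*η*ν + 4*μ*ν) * (vminus q)^2 + ν*(μ-η) := by
    rw [det_Bmat]; ring
  rw [hdet]
  have hC : 0 ≤ ν * (μ - η) := by nlinarith
  have hw1 : 1 < (vminus q)^2 := lt_of_le_of_lt hW1 hWlt
  nlinarith [mul_lt_mul_of_pos_left hWlt hA0]
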